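/- Generalized lemma with unequal sample sizes: if Z₁ = Σ_{i=1}^{M₁} exp(−E₁⁽ⁱ⁾) and Z₂ = Σ_{i=1}^{M₂} exp(−E₂⁽ⁱ⁾) with σ₁ > σ₂ > 0, then P(Z₁/M₁ > Z₂/M₂) ≥ 1 − [4/(e^{σ₁²/2} − e^{σ₂²/2})²]·[(e^{2σ₁²} − e^{σ₁²})/M₁ + (e^{2σ₂²} − e^{σ₂²})/M₂]. -/

import Mathlib

open MeasureTheory ProbabilityTheory Real Filter
open scoped NNReal ENNReal

lemma my_integrable_exp_quad {a : ℝ} (ha : 0 < a) (c : ℝ) :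
    Integrable fun x : ℝ => Real.exp (-a * x ^ 2 + c * x) := by
  have h : ∀ x : ℝ, -a * x ^ 2 + c * x
      = -a * (x + -(c / (2 * a))) ^ 2 + c ^ 2 / (4 * a) := by
    intro x; field_simp; ring
  simp_rw [h, Real.exp_add]
  have : Integrable ((fun x : ℝ => Real.exp (-a * x ^ 2)) ∘ (fun x => x + -(c / (2 * a)))) :=
    ((measurePreserving_add_right volume _).integrable_comp
      (Continuous.aestronglyMeasurable (by continuity))).mpr (integrable_exp_neg_mul_sq ha)
  exact this.mul_const _

lemma my_integral_exp_quad {a : ℝ} (ha : 0 < a) (c : ℝ) :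
    ∫ x : ℝ, Real.exp (-a * x ^ 2 + c * x)
      = Real.sqrt (π / a) * Real.exp (c ^ 2 / (4 * a)) := by
  have h : ∀ x : ℝ, -a * x ^ 2 + c * x
      = -a * (x + -(c / (2 * a))) ^ 2 + c ^ 2 / (4 * a) := by
    intro x; field_simp; ring
  simp_rw [h, Real.exp_add]
  rw [integral_mul_const,
    integral_add_right_eq_self (fun x : ℝ => Real.exp (-a * x ^ 2)) (-(c / (2 * a))),
    integral_gaussian]

lemma my_gaussian_pointwise (v : ℝ≥0) (hv : v ≠ 0) (t x : ℝ) :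
    gaussianPDFReal 0 v x * Real.exp (t * x)
      = (Real.sqrt (2 * π * v))⁻¹ * Real.exp (-(2 * (v:ℝ))⁻¹ * x ^ 2 + t * x) := by
  have hv' : (0:ℝ) < v := by positivity
  rw [gaussianPDFReal, mul_assoc, ← Real.exp_add]
  congr 2
  have : ((v:ℝ)) ≠ 0 := ne_of_gt hv'
  field_simp
  ring

lemma my_integrable_exp_mul_gaussian (v : ℝ≥0) (hv : v ≠ 0) (t : ℝ) :
    Integrable (fun x => Real.exp (t * x)) (gaussianReal 0 v) := by
  have hv' : (0:ℝ) < v := by positivity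
  rw [gaussianReal_of_var_ne_zero 0 hv]
  have hmeas : Measurable fun x : ℝ => (gaussianPDFReal 0 v x).toNNReal :=
    (measurable_gaussianPDFReal 0 v).real_toNNReal
  have hden : gaussianPDF 0 v = fun x => ((gaussianPDFReal 0 v x).toNNReal : ℝ≥0∞) := rfl
  rw [hden, integrable_withDensity_iff_integrable_smul hmeas]
  have : ∀ x : ℝ, (gaussianPDFReal 0 v x).toNNReal • Real.exp (t * x)
      = (Real.sqrt (2 * π * v))⁻¹ * Real.exp (-(2 * (v:ℝ))⁻¹ * x ^ 2 + t * x) := by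
    intro x
    rw [NNReal.smul_def, smul_eq_mul, Real.coe_toNNReal _ (gaussianPDFReal_nonneg 0 v x),
      my_gaussian_pointwise v hv t x]
  simp_rw [this]
  exact (my_integrable_exp_quad (by positivity) t).const_mul _

lemma my_integral_exp_mul_gaussian (v : ℝ≥0) (hv : v ≠ 0) (t : ℝ) :
    ∫ x, Real.exp (t * x) ∂(gaussianReal 0 v) = Real.exp (v * t ^ 2 / 2) := by
  have hv' : (0:ℝ) < v := by positivity
  rw [gaussianReal_of_var_ne_zero 0 hv]
  have hmeas : Measurable fun x : ℝ => (gaussianPDFReal 0 v x).toNNReal :=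
    (measurable_gaussianPDFReal 0 v).real_toNNReal
  have hden : gaussianPDF 0 v = fun x => ((gaussianPDFReal 0 v x).toNNReal : ℝ≥0∞) := rfl
  rw [hden, integral_withDensity_eq_integral_smul hmeas]
  have : ∀ x : ℝ, (gaussianPDFReal 0 v x).toNNReal • Real.exp (t * x)
      = (Real.sqrt (2 * π * v))⁻¹ * Real.exp (-(2 * (v:ℝ))⁻¹ * x ^ 2 + t * x) := by
    intro x
    rw [NNReal.smul_def, smul_eq_mul, Real.coe_toNNReal _ (gaussianPDFReal_nonneg 0 v x),
      my_gaussian_pointwise v hv t x]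
  simp_rw [this]
  rw [integral_const_mul, my_integral_exp_quad (by positivity) t]
  have h1 : π / (2 * (v:ℝ))⁻¹ = 2 * π * v := by field_simp
  have h2 : t ^ 2 / (4 * (2 * (v:ℝ))⁻¹) = (v:ℝ) * t ^ 2 / 2 := by field_simp; ring
  rw [h1, h2, ← mul_assoc, inv_mul_cancel₀ (by positivity), one_mul]

lemma my_moment {Ω : Type*} [MeasureSpace Ω] {E : Ω → ℝ} (hE : Measurable E) {v : ℝ≥0}
    (hv : v ≠ 0) (hd : Measure.map E ℙ = gaussianReal 0 v) (t : ℝ) :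
    Integrable (fun ω => Real.exp (t * E ω)) ℙ ∧
      ∫ ω, Real.exp (t * E ω) = Real.exp (v * t ^ 2 / 2) := by
  have hg : AEStronglyMeasurable (fun x : ℝ => Real.exp (t * x)) (Measure.map E ℙ) :=
    Continuous.aestronglyMeasurable (by continuity)
  constructor
  · exact (integrable_map_measure hg hE.aemeasurable).mp
      (by rw [hd]; exact my_integrable_exp_mul_gaussian v hv t)
  · rw [← my_integral_exp_mul_gaussian v hv t, ← hd, integral_map hE.aemeasurable hg]

lemma my_lognormal {Ω : Type*} [MeasureSpace Ω] [IsProbabilityMeasure (ℙ : Measure Ω)]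
    {E : Ω → ℝ} (hE : Measurable E) {v : ℝ≥0} (hv : v ≠ 0)
    (hd : Measure.map E ℙ = gaussianReal 0 v) :
    MemLp (fun ω => Real.exp (-(E ω))) 2 ℙ ∧
      Integrable (fun ω => Real.exp (-(E ω))) ℙ ∧
      (∫ ω, Real.exp (-(E ω)) = Real.exp ((v : ℝ) / 2)) ∧
      Var[fun ω => Real.exp (-(E ω))] = Real.exp (2 * (v : ℝ)) - Real.exp (v : ℝ) := by
  have h1 := my_moment hE hv hd (-1)
  have h2 := my_moment hE hv hd (-2)
  simp only [neg_one_mul] at h1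
  have hsq : (fun ω => Real.exp (-(E ω))) ^ 2 = fun ω => Real.exp (-2 * E ω) := by
    funext ω
    rw [Pi.pow_apply, sq, ← Real.exp_add]
    ring_nf
  have hmeas : Measurable fun ω => Real.exp (-(E ω)) := Real.measurable_exp.comp hE.neg
  have hmem : MemLp (fun ω => Real.exp (-(E ω))) 2 ℙ := by
    rw [memLp_two_iff_integrable_sq hmeas.aestronglyMeasurable]
    have : (fun ω => Real.exp (-(E ω)) ^ 2) = fun ω => Real.exp (-2 * E ω) := by
      funext ω; rw [sq, ← Real.exp_add]; ring_nf
    rw [this]; exact h2.1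
  have hmean : ∫ ω, Real.exp (-(E ω)) = Real.exp ((v : ℝ) / 2) := by
    rw [h1.2]; norm_num
  refine ⟨hmem, h1.1, hmean, ?_⟩
  rw [variance_eq_sub hmem, hsq, h2.2, hmean]
  have h3 : Real.exp ((v : ℝ) / 2) ^ 2 = Real.exp (v : ℝ) := by
    rw [sq, ← Real.exp_add]; ring_nf
  rw [h3, show ((v : ℝ) * (-2) ^ 2 / 2) = 2 * (v : ℝ) by ring]

theorem stmt11 {Ω : Type*} [MeasureSpace Ω] [IsProbabilityMeasure (ℙ : Measure Ω)]
    (σ₁ σ₂ : ℝ≥0) (hσ₂ : 0 < σ₂) (hσ : σ₂ < σ₁)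
    (M₁ M₂ : ℕ) (hM₁ : 1 ≤ M₁) (hM₂ : 1 ≤ M₂)
    (E₁ : Fin M₁ → Ω → ℝ) (E₂ : Fin M₂ → Ω → ℝ)
    (hE₁ : ∀ i, Measurable (E₁ i)) (hE₂ : ∀ i, Measurable (E₂ i))
    (hd₁ : ∀ i, Measure.map (E₁ i) ℙ = gaussianReal 0 (σ₁ ^ 2))
    (hd₂ : ∀ i, Measure.map (E₂ i) ℙ = gaussianReal 0 (σ₂ ^ 2))
    (hindep : iIndepFun (Sum.elim E₁ E₂) ℙ) :
    1 - ENNReal.ofReal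
        (4 / (Real.exp ((σ₁ : ℝ) ^ 2 / 2) - Real.exp ((σ₂ : ℝ) ^ 2 / 2)) ^ 2 *
          ((Real.exp (2 * (σ₁ : ℝ) ^ 2) - Real.exp ((σ₁ : ℝ) ^ 2)) / M₁
            + (Real.exp (2 * (σ₂ : ℝ) ^ 2) - Real.exp ((σ₂ : ℝ) ^ 2)) / M₂))
      ≤ ℙ {ω | (∑ i, Real.exp (-(E₂ i ω))) / M₂
              < (∑ i, Real.exp (-(E₁ i ω))) / M₁} := by
  classical
  have hσ₁pos : 0 < σ₁ := hσ₂.trans hσ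
  have hv₁ : (σ₁ ^ 2 : ℝ≥0) ≠ 0 := pow_ne_zero _ (ne_of_gt hσ₁pos)
  have hv₂ : (σ₂ ^ 2 : ℝ≥0) ≠ 0 := pow_ne_zero _ (ne_of_gt hσ₂)
  have hcoe1 : ((σ₁ ^ 2 : ℝ≥0) : ℝ) = (σ₁ : ℝ) ^ 2 := by push_cast; ring
  have hcoe2 : ((σ₂ ^ 2 : ℝ≥0) : ℝ) = (σ₂ : ℝ) ^ 2 := by push_cast; ring
  have hM₁pos : (0 : ℝ) < M₁ := by exact_mod_cast Nat.lt_of_lt_of_le Nat.zero_lt_one hM₁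
  have hM₂pos : (0 : ℝ) < M₂ := by exact_mod_cast Nat.lt_of_lt_of_le Nat.zero_lt_one hM₂
  -- abbreviations
  set m : ℝ := Real.exp ((σ₁ : ℝ) ^ 2 / 2) - Real.exp ((σ₂ : ℝ) ^ 2 / 2) with hm_def
  set V₁ : ℝ := Real.exp (2 * (σ₁ : ℝ) ^ 2) - Real.exp ((σ₁ : ℝ) ^ 2) with hV₁_def
  set V₂ : ℝ := Real.exp (2 * (σ₂ : ℝ) ^ 2) - Real.exp ((σ₂ : ℝ) ^ 2) with hV₂_def
  have hm_pos : 0 < m := by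
    have : (σ₂ : ℝ) ^ 2 / 2 < (σ₁ : ℝ) ^ 2 / 2 := by
      have h1 : (σ₂ : ℝ) < (σ₁ : ℝ) := by exact_mod_cast hσ
      have h2 : (0 : ℝ) ≤ (σ₂ : ℝ) := σ₂.coe_nonneg
      nlinarith
    simpa [hm_def, sub_pos] using Real.exp_lt_exp.mpr this
  have hV₁nonneg : 0 ≤ V₁ := by
    rw [hV₁_def, sub_nonneg]
    apply Real.exp_le_exp.mpr
    nlinarith [sq_nonneg (σ₁ : ℝ)]
  have hV₂nonneg : 0 ≤ V₂ := by
    rw [hV₂_def, sub_nonneg]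
    apply Real.exp_le_exp.mpr
    nlinarith [sq_nonneg (σ₂ : ℝ)]
  -- the summands
  set G : Fin M₁ ⊕ Fin M₂ → Ω → ℝ := Sum.elim E₁ E₂ with hG_def
  set c : Fin M₁ ⊕ Fin M₂ → ℝ :=
    Sum.elim (fun _ => ((M₁ : ℝ))⁻¹) (fun _ => -((M₂ : ℝ))⁻¹) with hc_def
  set Y : Fin M₁ ⊕ Fin M₂ → Ω → ℝ := fun j ω => c j * Real.exp (-(G j ω)) with hY_def
  have hGmeas : ∀ j, Measurable (G j) := by rintro (i | i); exacts [hE₁ i, hE₂ i]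
  have hW : ∀ j, MemLp (fun ω => Real.exp (-(G j ω))) 2 ℙ ∧
      Integrable (fun ω => Real.exp (-(G j ω))) ℙ ∧
      (∫ ω, Real.exp (-(G j ω)) = Real.exp ((Sum.elim (fun _ : Fin M₁ => (σ₁ : ℝ) ^ 2)
          (fun _ : Fin M₂ => (σ₂ : ℝ) ^ 2) j) / 2)) ∧
      Var[fun ω => Real.exp (-(G j ω))]
        = Real.exp (2 * Sum.elim (fun _ : Fin M₁ => (σ₁ : ℝ) ^ 2)
            (fun _ : Fin M₂ => (σ₂ : ℝ) ^ 2) j)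
          - Real.exp (Sum.elim (fun _ : Fin M₁ => (σ₁ : ℝ) ^ 2)
            (fun _ : Fin M₂ => (σ₂ : ℝ) ^ 2) j) := by
    rintro (i | i)
    · simpa [hcoe1, hG_def] using my_lognormal (hE₁ i) hv₁ (hd₁ i)
    · simpa [hcoe2, hG_def] using my_lognormal (hE₂ i) hv₂ (hd₂ i)
  have hYmem : ∀ j, MemLp (Y j) 2 ℙ := fun j => ((hW j).1).const_mul (c j)
  have hYint : ∀ j, Integrable (Y j) ℙ := fun j => ((hW j).2.1).const_mul (c j)
  set S : Ω → ℝ := ∑ j : Fin M₁ ⊕ Fin M₂, Y j with hS_def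
  have hSmem : MemLp S 2 ℙ := memLp_finset_sum' _ fun j _ => hYmem j
  have hSmeas : Measurable S := by
    have hfe : S = fun ω => ∑ j : Fin M₁ ⊕ Fin M₂, Y j ω := by
      funext ω; simp [hS_def]
    rw [hfe]
    exact Finset.measurable_sum _ fun j _ =>
      ((Real.measurable_exp.comp (hGmeas j).neg).const_mul (c j))
  -- pairwise independence
  have hpair : Set.Pairwise ↑(Finset.univ : Finset (Fin M₁ ⊕ Fin M₂))
      fun i j => IndepFun (Y i) (Y j) ℙ := by
    intro i _ j _ hij
    have h := hindep.indepFun hij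
    exact h.comp ((Real.measurable_exp.comp measurable_neg).const_mul (c i))
      ((Real.measurable_exp.comp measurable_neg).const_mul (c j))
  -- variance of S
  have hVarY : ∀ j, Var[Y j] = (c j) ^ 2 *
      (Real.exp (2 * Sum.elim (fun _ : Fin M₁ => (σ₁ : ℝ) ^ 2)
          (fun _ : Fin M₂ => (σ₂ : ℝ) ^ 2) j)
        - Real.exp (Sum.elim (fun _ : Fin M₁ => (σ₁ : ℝ) ^ 2)
          (fun _ : Fin M₂ => (σ₂ : ℝ) ^ 2) j)) := by
    intro j
    rw [hY_def, ← (hW j).2.2.2]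
    exact variance_const_mul (c j) _ _
  have hVarS : Var[S] = V₁ / M₁ + V₂ / M₂ := by
    rw [hS_def, IndepFun.variance_sum (fun j _ => hYmem j) hpair]
    rw [Fintype.sum_sum_type]
    simp only [hVarY, hc_def, Sum.elim_inl, Sum.elim_inr]
    rw [Finset.sum_const, Finset.sum_const, Finset.card_univ, Finset.card_univ,
      Fintype.card_fin, Fintype.card_fin, nsmul_eq_mul, nsmul_eq_mul]
    rw [hV₁_def, hV₂_def]
    field_simp
  -- expectation of S
  have hES : ∫ ω, S ω = m := by
    have h1 : ∫ ω, S ω = ∑ j : Fin M₁ ⊕ Fin M₂, ∫ ω, Y j ω := by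
      rw [hS_def]
      simp only [Finset.sum_apply]
      exact integral_finset_sum _ fun j _ => hYint j
    rw [h1]
    have h2 : ∀ j, ∫ ω, Y j ω = c j * Real.exp ((Sum.elim (fun _ : Fin M₁ => (σ₁ : ℝ) ^ 2)
        (fun _ : Fin M₂ => (σ₂ : ℝ) ^ 2) j) / 2) := by
      intro j
      rw [hY_def]
      simp only
      rw [integral_const_mul, (hW j).2.2.1]
    simp only [h2]
    rw [Fintype.sum_sum_type]
    simp only [hc_def, Sum.elim_inl, Sum.elim_inr]
    rw [Finset.sum_const, Finset.sum_const, Finset.card_univ, Finset.card_univ,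
      Fintype.card_fin, Fintype.card_fin, nsmul_eq_mul, nsmul_eq_mul]
    rw [hm_def]
    field_simp
    ring
  -- identify the event
  have hSapply : ∀ ω, S ω = (∑ i, Real.exp (-(E₁ i ω))) / M₁
      - (∑ i, Real.exp (-(E₂ i ω))) / M₂ := by
    intro ω
    rw [hS_def]
    simp only [Finset.sum_apply, hY_def, hc_def, hG_def, Fintype.sum_sum_type,
      Sum.elim_inl, Sum.elim_inr]
    rw [← Finset.mul_sum, ← Finset.mul_sum]
    field_simp
    ring
  set A := {ω | (∑ i, Real.exp (-(E₂ i ω))) / (M₂ : ℝ)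
      < (∑ i, Real.exp (-(E₁ i ω))) / (M₁ : ℝ)} with hA_def
  have hAeq : A = {ω | 0 < S ω} := by
    ext ω
    simp only [hA_def, Set.mem_setOf_eq, hSapply ω, sub_pos]
  have hA_meas : MeasurableSet A := by
    rw [hAeq]; exact measurableSet_lt measurable_const hSmeas
  -- Chebyshev
  have hcheb := meas_ge_le_variance_div_sq (μ := ℙ) hSmem hm_pos
  have hsub : Aᶜ ⊆ {ω | m ≤ |S ω - ∫ ω, S ω|} := by
    intro ω hω
    rw [hAeq] at hω
    simp only [Set.mem_compl_iff, Set.mem_setOf_eq, not_lt] at hω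
    simp only [Set.mem_setOf_eq, hES]
    calc m ≤ m - S ω := by linarith
    _ ≤ |m - S ω| := le_abs_self _
    _ = |S ω - m| := abs_sub_comm _ _
  have hAc : ℙ Aᶜ ≤ ENNReal.ofReal
      (4 / m ^ 2 * (V₁ / M₁ + V₂ / M₂)) := by
    refine le_trans (measure_mono hsub) (le_trans hcheb ?_)
    apply ENNReal.ofReal_le_ofReal
    have hsum : 0 ≤ V₁ / M₁ + V₂ / M₂ := by positivity
    rw [hVarS, div_le_iff₀ (by positivity : (0:ℝ) < m ^ 2)]
    have h44 : 4 / m ^ 2 * (V₁ / ↑M₁ + V₂ / ↑M₂) * m ^ 2 = 4 * (V₁ / ↑M₁ + V₂ / ↑M₂) := by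
      field_simp
    rw [h44]
    linarith
  have hPA : ℙ A = 1 - ℙ Aᶜ := by
    have h := prob_compl_eq_one_sub (μ := ℙ) hA_meas.compl
    rwa [compl_compl] at h
  rw [hPA]
  exact tsub_le_tsub_left hAc 1
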